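/- arXiv:1710.07063 — 2 statements merged into one kernel-verified Lean document; each statement's English description precedes it below -/
import Mathlib

section
/- For a matrix H with singular value decomposition H = U Σ V† and σ_r > σ_{r+1}, the matrix Z* = V_r Σ_r⁻¹ U_r† (where Σ_r⁻¹ = diag(1/σ₁,…,1/σ_r), and U_r, V_r are the first r columns of U, V) minimizes ‖Z H − I‖_F over all matrices Z of rank at most r. -/
open Matrix

lemma aux_rank_eq_finrank_range_toEuclideanLin {N : ℕ} (A : Matrix (Fin N) (Fin N) ℝ) :
    Module.finrank ℝ (LinearMap.range (Matrix.toEuclideanLin A)) = A.rank := by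
  let f := WithLp.linearEquiv 2 ℝ (Fin N → ℝ)
  have h1 : (Matrix.toEuclideanLin (𝕜 := ℝ) A :
        EuclideanSpace ℝ (Fin N) →ₗ[ℝ] EuclideanSpace ℝ (Fin N))
      = f.symm.toLinearMap ∘ₗ (A.mulVecLin ∘ₗ f.toLinearMap) := rfl
  rw [h1, LinearMap.range_comp, LinearMap.range_comp_of_range_eq_top _ f.range]
  exact LinearEquiv.finrank_map_eq f.symm _

lemma aux_sum_sq_eq_trace {m n : Type*} [Fintype m] [Fintype n] (X : Matrix m n ℝ) :
    ∑ a, ∑ b, X a b ^ 2 = Matrix.trace (Xᵀ * X) := by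
  simp only [Matrix.trace, Matrix.diag, Matrix.mul_apply, Matrix.transpose_apply, sq]
  exact Finset.sum_comm

/-- Cauchy–Schwarz against the projection onto the range:
`(tr A)² ≤ rank A * ‖A‖_F²`. -/
lemma aux_trace_sq_le {N : ℕ} (A : Matrix (Fin N) (Fin N) ℝ) :
    (Matrix.trace A) ^ 2 ≤ (A.rank : ℝ) * ∑ a, ∑ b, A a b ^ 2 := by
  classical
  set K : Submodule ℝ (EuclideanSpace ℝ (Fin N)) := LinearMap.range (Matrix.toEuclideanLin A)
    with hK
  have hfin : Module.finrank ℝ K = A.rank := aux_rank_eq_finrank_range_toEuclideanLin A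
  set k := Module.finrank ℝ K with hk
  let b : OrthonormalBasis (Fin k) ℝ K := stdOrthonormalBasis ℝ K
  let w : Fin k → (Fin N → ℝ) := fun i => ((b i : K) : EuclideanSpace ℝ (Fin N))
  have hon : ∀ i j, (∑ a, w i a * w j a) = if i = j then (1:ℝ) else 0 := by
    intro i j
    have h := orthonormal_iff_ite.mp b.orthonormal i j
    rw [Submodule.coe_inner] at h
    simp [PiLp.inner_apply, RCLike.inner_apply, conj_trivial, w] at h
    rw [← h]
    exact Finset.sum_congr rfl fun _ _ => mul_comm _ _
  let ev : ∀ _ : Fin N, EuclideanSpace ℝ (Fin N) →ₗ[ℝ] ℝ := fun c =>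
    (LinearMap.proj c).comp (WithLp.linearEquiv 2 ℝ (Fin N → ℝ)).toLinearMap
  have hexp : ∀ v : EuclideanSpace ℝ (Fin N), v ∈ K → ∀ c,
      v c = ∑ i, (∑ a, w i a * v a) * w i c := by
    intro v hv c
    have h := b.sum_repr' ⟨v, hv⟩
    have h2 := congrArg (fun z : K => ev c (z : EuclideanSpace ℝ (Fin N))) h
    simp only [Submodule.coe_sum, Submodule.coe_smul, map_sum, _root_.map_smul, smul_eq_mul,
      Submodule.coe_inner] at h2
    rw [show v c = (ev c) v from rfl, ← h2]
    simp [ev, PiLp.inner_apply, RCLike.inner_apply, conj_trivial, w]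
    refine Finset.sum_congr rfl fun _ _ => ?_
    congr 1
    exact Finset.sum_congr rfl fun _ _ => mul_comm _ _
  have hcolmem : ∀ c : Fin N, ((WithLp.equiv 2 (Fin N → ℝ)).symm (fun a => A a c)) ∈ K := by
    intro c
    refine ⟨(WithLp.equiv 2 (Fin N → ℝ)).symm (Pi.single c 1), ?_⟩
    rw [Matrix.toEuclideanLin_apply]
    congr 1
    funext a
    simp [Matrix.mulVec_single]
  let W : Matrix (Fin k) (Fin N) ℝ := fun i a => w i a
  have hWWt : W * Wᵀ = 1 := by
    ext i j
    rw [Matrix.mul_apply, Matrix.one_apply]; exact hon i j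
  set P : Matrix (Fin N) (Fin N) ℝ := Wᵀ * W with hPdef
  have hPsymm : Pᵀ = P := by
    simp [hPdef, Matrix.transpose_mul, Matrix.transpose_transpose]
  have hPA : P * A = A := by
    ext a c
    have h := hexp _ (hcolmem c) a
    have hv : ∀ x, ((WithLp.equiv 2 (Fin N → ℝ)).symm (fun a => A a c)) x = A x c := fun _ => rfl
    simp only [hv] at h
    rw [Matrix.mul_apply]
    simp only [hPdef, Matrix.mul_apply, Matrix.transpose_apply]
    rw [h]
    simp only [Finset.sum_mul]
    rw [Finset.sum_comm]
    exact Finset.sum_congr rfl fun i _ => Finset.sum_congr rfl fun x _ => by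
      simp only [W]; ring
  have hPP : P * P = P := by
    have : P * P = Wᵀ * (W * Wᵀ) * W := by
      simp only [hPdef, Matrix.mul_assoc]
    rw [this, hWWt, Matrix.mul_one]
  have hsumP2 : ∑ a, ∑ c, P a c ^ 2 = (k : ℝ) := by
    rw [aux_sum_sq_eq_trace, hPsymm, hPP, hPdef, Matrix.trace_mul_comm, hWWt,
      Matrix.trace_one]
    simp
  have htrA : Matrix.trace A = ∑ a, ∑ c, P a c * A a c := by
    conv_lhs => rw [← hPA]
    simp only [Matrix.trace, Matrix.diag, Matrix.mul_apply]
    rw [Finset.sum_comm]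
    refine Finset.sum_congr rfl fun a _ => Finset.sum_congr rfl fun c _ => ?_
    have := congrFun (congrFun hPsymm a) c
    simp only [Matrix.transpose_apply] at this
    rw [this]
  have hCS := Finset.sum_mul_sq_le_sq_mul_sq Finset.univ
    (fun p : Fin N × Fin N => P p.1 p.2) (fun p : Fin N × Fin N => A p.1 p.2)
  rw [htrA]
  have e1 : ∑ p : Fin N × Fin N, P p.1 p.2 * A p.1 p.2 = ∑ a, ∑ c, P a c * A a c :=
    Fintype.sum_prod_type _
  have e2 : ∑ p : Fin N × Fin N, P p.1 p.2 ^ 2 = ∑ a, ∑ c, P a c ^ 2 :=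
    Fintype.sum_prod_type _
  have e3 : ∑ p : Fin N × Fin N, A p.1 p.2 ^ 2 = ∑ a, ∑ c, A a c ^ 2 :=
    Fintype.sum_prod_type _
  rw [e1, e2, e3, hsumP2] at hCS
  rw [← hfin]
  exact hCS

/-- Any rank-`≤ r` matrix is at Frobenius distance at least `√(N - r)` from the identity. -/
lemma aux_lower {N r : ℕ} (A : Matrix (Fin N) (Fin N) ℝ) (hA : A.rank ≤ r) :
    (N : ℝ) - r ≤ ∑ a, ∑ b, (A - 1) a b ^ 2 := by
  classical
  have key : ∀ a b : Fin N, (A - 1) a b ^ 2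
      = A a b ^ 2 - 2 * (if a = b then A a b else 0) + (if a = b then (1:ℝ) else 0) := by
    intro a b
    by_cases h : a = b <;> simp [Matrix.sub_apply, Matrix.one_apply, h] <;> ring
  have hsum : ∑ a, ∑ b, (A - 1) a b ^ 2
      = (∑ a, ∑ b, A a b ^ 2) - 2 * Matrix.trace A + N := by
    simp_rw [key]
    rw [Finset.sum_congr rfl (fun a _ => Finset.sum_add_distrib),
      Finset.sum_add_distrib,
      Finset.sum_congr rfl (fun a _ => Finset.sum_sub_distrib _ _),
      Finset.sum_sub_distrib]
    congr 1
    · congr 1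
      simp_rw [← Finset.mul_sum]
      congr 1
      simp only [Finset.sum_ite_eq, Finset.mem_univ, if_true]
      rfl
    · simp
  rw [hsum]
  have ht := aux_trace_sq_le A
  have hrank : ((A.rank : ℝ)) ≤ (r : ℝ) := by exact_mod_cast hA
  have hS : (0:ℝ) ≤ ∑ a, ∑ b, A a b ^ 2 := by positivity
  set S := ∑ a, ∑ b, A a b ^ 2 with hSdef
  set t := Matrix.trace A with htdef
  have ht2 : t ^ 2 ≤ (r:ℝ) * S := le_trans ht (by nlinarith)
  have hr0 : (0:ℝ) ≤ (r:ℝ) := Nat.cast_nonneg r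
  nlinarith [sq_nonneg (S - (r:ℝ)), sq_nonneg (S + (r:ℝ) + 2*t), sq_nonneg (S + (r:ℝ) - 2*t)]

lemma aux_conj_sum_sq {N : ℕ} (V M : Matrix (Fin N) (Fin N) ℝ) (hV : Vᵀ * V = 1) :
    ∑ a, ∑ b, (V * M * Vᵀ) a b ^ 2 = ∑ a, ∑ b, M a b ^ 2 := by
  rw [aux_sum_sq_eq_trace, aux_sum_sq_eq_trace]
  have : (V * M * Vᵀ)ᵀ * (V * M * Vᵀ) = V * (Mᵀ * M) * Vᵀ := by
    simp only [Matrix.transpose_mul, Matrix.transpose_transpose, Matrix.mul_assoc]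
    rw [← Matrix.mul_assoc Vᵀ V, hV, Matrix.one_mul]
  rw [this, Matrix.trace_mul_comm, ← Matrix.mul_assoc, ← Matrix.mul_assoc, hV,
    Matrix.one_mul]

lemma aux_count {N r : ℕ} (h : r ≤ N) :
    ∑ i : Fin N, (if (i : ℕ) < r then (0:ℝ) else 1) = (N : ℝ) - r := by
  rw [Fin.sum_univ_eq_sum_range (fun i => if i < r then (0:ℝ) else 1)]
  rw [Finset.range_eq_Ico, ← Finset.sum_Ico_consecutive _ (Nat.zero_le r) h]
  have h1 : ∑ i ∈ Finset.Ico 0 r, (if i < r then (0:ℝ) else 1) = 0 :=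
    Finset.sum_eq_zero fun i hi => by simp [(Finset.mem_Ico.mp hi).2]
  have h2 : ∑ i ∈ Finset.Ico r N, (if i < r then (0:ℝ) else 1) = ((N - r : ℕ) : ℝ) := by
    rw [Finset.sum_congr rfl (fun i hi =>
      show (if i < r then (0:ℝ) else 1) = 1 by
        simp [Nat.not_lt.mpr (Finset.mem_Ico.mp hi).1])]
    simp [Nat.card_Ico]
  rw [h1, h2, zero_add, Nat.cast_sub h]

/-- Optimal rank-`r` approximation of the inverse (Chung et al., Theorem 3):
for `H = U Σ Vᵀ` with orthogonal `U, V`, positive decreasing singular values `σ`, and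
a gap `σ_r > σ_{r+1}` (0-indexed: `σ (r-1) > σ r`), the matrix
`Z* = V_r Σ_r⁻¹ U_rᵀ` minimizes `‖Z H − I‖_F²` over all `Z` of rank at most `r`. -/
theorem truncated_svd_minimizes_inverse_residual
    {N : ℕ} (r : ℕ) (hr0 : 1 ≤ r) (hr : r < N)
    (U V : Matrix (Fin N) (Fin N) ℝ) (sigma : Fin N → ℝ)
    (hU : Uᵀ * U = 1) (hV : Vᵀ * V = 1)
    (hpos : ∀ i, 0 < sigma i)
    (hord : ∀ i j : Fin N, i ≤ j → sigma j ≤ sigma i)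
    (hgap : sigma ⟨r, hr⟩ < sigma ⟨r - 1, Nat.lt_of_le_of_lt (Nat.pred_le r) hr⟩)
    (H : Matrix (Fin N) (Fin N) ℝ)
    (hH : H = U * Matrix.diagonal sigma * Vᵀ)
    (Zstar : Matrix (Fin N) (Fin N) ℝ)
    (hZstar : Zstar = V * Matrix.diagonal
        (fun i : Fin N => if (i : ℕ) < r then (sigma i)⁻¹ else 0) * Uᵀ) :
    ∀ Z : Matrix (Fin N) (Fin N) ℝ, Z.rank ≤ r →
      ∑ a, ∑ b, (Zstar * H - 1) a b ^ 2 ≤ ∑ a, ∑ b, (Z * H - 1) a b ^ 2 := by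
  intro Z hZ
  classical
  have hVV : V * Vᵀ = 1 := mul_eq_one_comm.mp hV
  set D := Matrix.diagonal sigma with hD
  set B := Vᵀ * Z * U * D with hB
  -- rewrite Z H - 1 as a conjugation
  have hrw : Z * H - 1 = V * (B - 1) * Vᵀ := by
    rw [hH, hB, Matrix.mul_sub, Matrix.mul_one, Matrix.sub_mul, hVV]
    congr 1
    simp only [← Matrix.mul_assoc]
    rw [hVV, Matrix.one_mul]
  have hrank : B.rank ≤ r := by
    have h1 : B = Vᵀ * (Z * (U * D)) := by rw [hB]; simp only [Matrix.mul_assoc]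
    calc B.rank ≤ (Z * (U * D)).rank := by rw [h1]; exact Matrix.rank_mul_le_right _ _
      _ ≤ Z.rank := Matrix.rank_mul_le_left _ _
      _ ≤ r := hZ
  have hRHS : (N : ℝ) - r ≤ ∑ a, ∑ b, (Z * H - 1) a b ^ 2 := by
    rw [hrw, aux_conj_sum_sq V _ hV]
    exact aux_lower _ hrank
  -- compute the value at Zstar
  have hdiag : Matrix.diagonal (fun i : Fin N => if (i : ℕ) < r then (sigma i)⁻¹ else 0) * D
      = Matrix.diagonal (fun i : Fin N => if (i : ℕ) < r then (1:ℝ) else 0) := by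
    have hfun : (fun i : Fin N => (if (i : ℕ) < r then (sigma i)⁻¹ else 0) * sigma i)
        = fun i : Fin N => if (i : ℕ) < r then (1:ℝ) else 0 := by
      funext i
      by_cases h : (i : ℕ) < r
      · simp [h, inv_mul_cancel₀ (hpos i).ne']
      · simp [h]
    rw [hD, Matrix.diagonal_mul_diagonal, hfun]
  have hZH : Zstar * H = V * Matrix.diagonal (fun i : Fin N => if (i : ℕ) < r then (1:ℝ) else 0) * Vᵀ := by
    rw [hZstar, hH, ← hdiag]
    simp only [← Matrix.mul_assoc]
    rw [Matrix.mul_assoc (V * Matrix.diagonal fun i : Fin N => if (i : ℕ) < r then (sigma i)⁻¹ else 0) Uᵀ U,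
      hU, Matrix.mul_one]
  have hLHSrw : Zstar * H - 1
      = V * Matrix.diagonal (fun i : Fin N => (if (i : ℕ) < r then (1:ℝ) else 0) - 1) * Vᵀ := by
    rw [hZH]
    have hd : Matrix.diagonal (fun i : Fin N => (if (i : ℕ) < r then (1:ℝ) else 0) - 1)
        = Matrix.diagonal (fun i : Fin N => if (i : ℕ) < r then (1:ℝ) else 0) - 1 := by
      rw [← Matrix.diagonal_one, Matrix.diagonal_sub]
    rw [hd, Matrix.mul_sub, Matrix.mul_one, Matrix.sub_mul, hVV]
  have hLHS : ∑ a, ∑ b, (Zstar * H - 1) a b ^ 2 = (N : ℝ) - r := by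
    rw [hLHSrw, aux_conj_sum_sq V _ hV]
    have hsq : ∀ a b : Fin N,
        (Matrix.diagonal (fun i : Fin N => (if (i : ℕ) < r then (1:ℝ) else 0) - 1)) a b ^ 2
        = if a = b then (if (a : ℕ) < r then (0:ℝ) else 1) else 0 := by
      intro a b
      by_cases h : a = b
      · subst h
        by_cases h2 : (a : ℕ) < r <;>
          norm_num [Matrix.diagonal_apply_eq, h2]
      · simp [Matrix.diagonal_apply_ne _ h, h]
    simp_rw [hsq]
    rw [Finset.sum_congr rfl (fun a _ => Finset.sum_ite_eq (Finset.univ : Finset (Fin N)) a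
      (fun _ => if (a : ℕ) < r then (0:ℝ) else 1))]
    simp only [Finset.mem_univ, if_true]
    exact aux_count hr.le
  rw [hLHS]
  exact hRHS
end

section
/- The Marchenko–Pastur density ρ(λ) = (1/(2πσ²cλ))·√((c₊−λ)(λ−c₋)) supported on (c₋, c₊), with c± = σ²(1±√c)², integrates to 1 when 0 < c ≤ 1. -/
open Real MeasureTheory Set intervalIntegral

/-- Antiderivative of `√(r² - (x-m)²)/x`. -/
noncomputable def mpF (m r : ℝ) (x : ℝ) : ℝ :=
  m * Real.arcsin ((x - m) / r) + Real.sqrt (r ^ 2 - (x - m) ^ 2)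
    - Real.sqrt (m ^ 2 - r ^ 2) * Real.arcsin ((r ^ 2 + m * (x - m)) / (r * x))

lemma mp_deriv (m r : ℝ) (hr : 0 < r) (hrm : r ≤ m) {x : ℝ}
    (hx : x ∈ Set.Ioo (m - r) (m + r)) :
    HasDerivAt (mpF m r) (Real.sqrt ((m + r - x) * (x - (m - r))) / x) x := by
  obtain ⟨hx1, hx2⟩ := hx
  have hxpos : 0 < x := by linarith
  have hu1 : -r < x - m := by linarith
  have hu2 : x - m < r := by linarith
  have hW2 : (0:ℝ) < r ^ 2 - (x - m) ^ 2 := by nlinarith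
  set W := Real.sqrt (r ^ 2 - (x - m) ^ 2) with hWdef
  have hWpos : 0 < W := Real.sqrt_pos.mpr hW2
  have hWsq : W ^ 2 = r ^ 2 - (x - m) ^ 2 := Real.sq_sqrt hW2.le
  have htarget : Real.sqrt ((m + r - x) * (x - (m - r))) = W := by
    rw [hWdef]; congr 1; ring
  rw [htarget]
  -- term 1
  have hinner1 : HasDerivAt (fun y => (y - m) / r) (1 / r) x := by
    simpa using ((hasDerivAt_id x).sub_const m).div_const r
  have hlt1 : (x - m) / r < 1 := by rw [div_lt_one hr]; linarith
  have hgt1 : -1 < (x - m) / r := by rw [neg_lt, ← neg_div]; rw [div_lt_one hr]; linarith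
  have hsq1 : Real.sqrt (1 - ((x - m) / r) ^ 2) = W / r := by
    rw [show 1 - ((x - m) / r) ^ 2 = (r ^ 2 - (x - m) ^ 2) / r ^ 2 by field_simp]
    rw [Real.sqrt_div hW2.le, Real.sqrt_sq hr.le]
  have h1 : HasDerivAt (fun y => m * Real.arcsin ((y - m) / r))
      (m * (1 / Real.sqrt (1 - ((x - m) / r) ^ 2) * (1 / r))) x :=
    ((Real.hasDerivAt_arcsin (by linarith) (by linarith)).comp x hinner1).const_mul m
  rw [hsq1] at h1
  -- term 2
  have hinner2 : HasDerivAt (fun y => r ^ 2 - (y - m) ^ 2) (-(2 * (x - m))) x := by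
    have := (((hasDerivAt_id x).sub_const m).pow 2).const_sub (r ^ 2)
    simpa using this
  have h2 : HasDerivAt (fun y => Real.sqrt (r ^ 2 - (y - m) ^ 2))
      (-(2 * (x - m)) * (1 / (2 * W))) x := by
    have := (Real.hasDerivAt_sqrt hW2.ne').comp x hinner2
    rw [show -(2 * (x - m)) * (1 / (2 * W)) = 1 / (2 * W) * -(2 * (x - m)) from mul_comm _ _]
    exact this
  -- term 3
  rcases eq_or_lt_of_le hrm with heq | hlt
  · -- m = r : third term is the zero function
    subst heq
    have hzero : (fun y => Real.sqrt (r ^ 2 - r ^ 2)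
        * Real.arcsin ((r ^ 2 + r * (y - r)) / (r * y))) = fun _ => (0:ℝ) := by
      funext y
      rw [show r ^ 2 - r ^ 2 = 0 by ring]
      simp
    have hcomb := h1.add h2
    have : HasDerivAt (mpF r r) (r * (1 / (W / r) * (1 / r)) + -(2 * (x - r)) * (1 / (2 * W)) - 0) x := by
      unfold mpF
      exact (hcomb.sub (hzero ▸ hasDerivAt_const x (0:ℝ)))
    convert this using 1
    field_simp
    linear_combination hWsq
  · -- m > r
    have hspos : (0:ℝ) < m ^ 2 - r ^ 2 := by nlinarith
    set s := Real.sqrt (m ^ 2 - r ^ 2) with hsdef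
    have hsp : 0 < s := Real.sqrt_pos.mpr hspos
    have hssq : s ^ 2 = m ^ 2 - r ^ 2 := Real.sq_sqrt hspos.le
    -- inner function g
    have hden : r * x ≠ 0 := by positivity
    have hinnerN : HasDerivAt (fun y => r ^ 2 + m * (y - m)) m x := by
      simpa using (((hasDerivAt_id x).sub_const m).const_mul m).const_add (r ^ 2)
    have hinnerD : HasDerivAt (fun y => r * y) r x := by
      simpa using (hasDerivAt_id x).const_mul r
    have hg : HasDerivAt (fun y => (r ^ 2 + m * (y - m)) / (r * y))
        ((m * (r * x) - (r ^ 2 + m * (x - m)) * r) / (r * x) ^ 2) x :=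
      hinnerN.div hinnerD hden
    have hgval : (m * (r * x) - (r ^ 2 + m * (x - m)) * r) / (r * x) ^ 2
        = (m ^ 2 - r ^ 2) / (r * x ^ 2) := by
      field_simp; ring
    have hg2 : 1 - ((r ^ 2 + m * (x - m)) / (r * x)) ^ 2
        = (s * W / (r * x)) ^ 2 := by
      field_simp
      linear_combination (-(s^2)) * hWsq - (r^2-(x-m)^2) * hssq
    have hg2pos : 0 < 1 - ((r ^ 2 + m * (x - m)) / (r * x)) ^ 2 := by
      rw [hg2]; positivity
    have hglt : (r ^ 2 + m * (x - m)) / (r * x) ≠ 1 := by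
      intro h; rw [h] at hg2pos; norm_num at hg2pos
    have hggt : (r ^ 2 + m * (x - m)) / (r * x) ≠ -1 := by
      intro h; rw [h] at hg2pos; norm_num at hg2pos
    have hsq3 : Real.sqrt (1 - ((r ^ 2 + m * (x - m)) / (r * x)) ^ 2) = s * W / (r * x) := by
      rw [hg2, Real.sqrt_sq (by positivity)]
    have h3 : HasDerivAt (fun y => s * Real.arcsin ((r ^ 2 + m * (y - m)) / (r * y)))
        (s * (1 / (s * W / (r * x)) * ((m ^ 2 - r ^ 2) / (r * x ^ 2)))) x := by
      have := ((Real.hasDerivAt_arcsin hggt hglt).comp x hg).const_mul s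
      rw [hsq3, hgval] at this
      exact this
    have hcomb := (h1.add h2).sub h3
    convert hcomb using 1
    case e'_4 => rfl
    case e'_5 => rfl
    case e'_8 => rfl
    rw [← hssq]
    field_simp
    linear_combination hWsq + hssq

lemma mp_cont (m r : ℝ) (hr : 0 < r) (hrm : r ≤ m) :
    ContinuousOn (mpF m r) (Set.Icc (m - r) (m + r)) := by
  have h12 : ContinuousOn (fun x => m * Real.arcsin ((x - m) / r)
      + Real.sqrt (r ^ 2 - (x - m) ^ 2)) (Set.Icc (m - r) (m + r)) := by
    apply Continuous.continuousOn
    apply Continuous.add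
    · exact continuous_const.mul (Real.continuous_arcsin.comp
        ((continuous_id.sub continuous_const).div_const r))
    · exact Real.continuous_sqrt.comp
        (continuous_const.sub ((continuous_id.sub continuous_const).pow 2))
  rcases eq_or_lt_of_le hrm with heq | hlt
  · subst heq
    have : mpF r r = fun x => r * Real.arcsin ((x - r) / r)
        + Real.sqrt (r ^ 2 - (x - r) ^ 2) := by
      funext y
      unfold mpF
      rw [show r ^ 2 - r ^ 2 = 0 by ring]
      simp
    rw [this]
    exact h12
  · apply h12.sub
    apply ContinuousOn.mul continuousOn_const
    apply Real.continuous_arcsin.comp_continuousOn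
    apply ContinuousOn.div
    · exact Continuous.continuousOn (by continuity)
    · exact Continuous.continuousOn (by continuity)
    · intro x hx
      have : 0 < x := lt_of_lt_of_le (by linarith) hx.1
      positivity

lemma mp_integrable (m r : ℝ) (hr : 0 < r) (hrm : r ≤ m) :
    IntervalIntegrable (fun x => Real.sqrt ((m + r - x) * (x - (m - r))) / x)
      volume (m - r) (m + r) := by
  rcases eq_or_lt_of_le hrm with heq | hlt
  · -- m = r : singular endpoint 0, dominate by √(2r) * x^(-1/2)
    subst heq
    have hb : (0:ℝ) < 2 * r := by linarith
    have hg : IntervalIntegrable (fun x : ℝ => Real.sqrt (2 * r) * x ^ (-(1/2) : ℝ))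
        volume (r - r) (r + r) := by
      exact (intervalIntegral.intervalIntegrable_rpow' (by norm_num)).const_mul _
    apply hg.mono_fun
    · apply Measurable.aestronglyMeasurable
      apply Measurable.div
      · exact (Real.continuous_sqrt.comp (by continuity)).measurable
      · exact measurable_id
    · rw [Filter.EventuallyLE, ae_restrict_iff' measurableSet_uIoc]
      refine Filter.Eventually.of_forall (fun x hx => ?_)
      rw [Set.uIoc_of_le (by linarith)] at hx
      obtain ⟨hx0, hxb⟩ := hx
      have hx0' : (0:ℝ) < x := by linarith
      have h1 : ‖Real.sqrt ((r + r - x) * (x - (r - r))) / x‖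
          = Real.sqrt ((r + r - x) * x) / x := by
        rw [Real.norm_eq_abs, abs_of_nonneg (by positivity)]
        norm_num
      have h2 : ‖Real.sqrt (2 * r) * x ^ (-(1/2) : ℝ)‖
          = Real.sqrt (2 * r) * x ^ (-(1/2) : ℝ) := by
        rw [Real.norm_eq_abs, abs_of_nonneg (by positivity)]
      rw [h1, h2]
      have hxr : x ^ (-(1/2) : ℝ) = Real.sqrt x / x := by
        rw [Real.rpow_neg hx0'.le, ← Real.sqrt_eq_rpow]
        rw [eq_div_iff hx0'.ne', inv_mul_eq_div, div_eq_iff (Real.sqrt_pos.mpr hx0').ne']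
        exact (Real.mul_self_sqrt hx0'.le).symm
      rw [hxr, ← mul_div_assoc, ← Real.sqrt_mul (by positivity), div_le_div_iff_of_pos_right hx0']
      apply Real.sqrt_le_sqrt
      nlinarith
  · -- m > r : continuous on the interval
    apply ContinuousOn.intervalIntegrable
    rw [Set.uIcc_of_le (by linarith)]
    apply ContinuousOn.div
    · exact Continuous.continuousOn (Real.continuous_sqrt.comp (by continuity))
    · exact continuousOn_id
    · intro x hx
      have : 0 < x := lt_of_lt_of_le (by linarith) hx.1
      exact this.ne'

lemma mp_key (m r : ℝ) (hr : 0 < r) (hrm : r ≤ m) :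
    ∫ x in (m - r)..(m + r), Real.sqrt ((m + r - x) * (x - (m - r))) / x
      = Real.pi * (m - Real.sqrt (m ^ 2 - r ^ 2)) := by
  have h0m : 0 ≤ m - r := by linarith
  rw [intervalIntegral.integral_eq_sub_of_hasDerivAt_of_le (by linarith)
    (mp_cont m r hr hrm) (fun x hx => mp_deriv m r hr hrm hx) (mp_integrable m r hr hrm)]
  have hmr : (0:ℝ) < m + r := by linarith
  have harg1 : ((m + r) - m) / r = 1 := by field_simp; ring
  have harg2 : ((m - r) - m) / r = -1 := by field_simp; ring
  have harg3 : (r ^ 2 + m * ((m + r) - m)) / (r * (m + r)) = 1 := by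
    rw [show r ^ 2 + m * ((m + r) - m) = r * (m + r) by ring]
    field_simp
  have hs : Real.sqrt (m ^ 2 - r ^ 2) * Real.arcsin
      ((r ^ 2 + m * ((m - r) - m)) / (r * (m - r)))
      = Real.sqrt (m ^ 2 - r ^ 2) * (-(Real.pi / 2)) := by
    rcases eq_or_lt_of_le hrm with heq | hlt
    · rw [← heq]; simp
    · have h0 : (0:ℝ) < m - r := by linarith
      have : (r ^ 2 + m * ((m - r) - m)) / (r * (m - r)) = -1 := by
        rw [show r ^ 2 + m * ((m - r) - m) = -(r * (m - r)) by ring]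
        rw [neg_div, div_self (by positivity)]
      rw [this, Real.arcsin_neg, Real.arcsin_one]
  simp only [mpF, harg1, harg2, harg3, Real.arcsin_one, Real.arcsin_neg, hs]
  rw [show r ^ 2 - ((m + r) - m) ^ 2 = 0 by ring, show r ^ 2 - ((m - r) - m) ^ 2 = 0 by ring]
  simp
  ring

/-- The Marchenko–Pastur density integrates to 1 when `0 < c ≤ 1`:
`∫_{c₋}^{c₊} √((c₊−λ)(λ−c₋)) / (2πσ²cλ) dλ = 1` with `c± = σ²(1±√c)²`. -/
theorem marchenko_pastur_integrates_to_one
    (σ c : ℝ) (hσ : 0 < σ) (hc0 : 0 < c) (hc1 : c ≤ 1)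
    (cm cp : ℝ) (hcm : cm = σ ^ 2 * (1 - Real.sqrt c) ^ 2)
    (hcp : cp = σ ^ 2 * (1 + Real.sqrt c) ^ 2) :
    ∫ lam in cm..cp,
        Real.sqrt ((cp - lam) * (lam - cm)) / (2 * Real.pi * σ ^ 2 * c * lam) = 1 := by
  set m : ℝ := σ ^ 2 * (1 + c) with hm
  set r : ℝ := 2 * σ ^ 2 * Real.sqrt c with hrdef
  have hsc : Real.sqrt c ^ 2 = c := Real.sq_sqrt hc0.le
  have hscpos : 0 < Real.sqrt c := Real.sqrt_pos.mpr hc0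
  have hr : 0 < r := by positivity
  have hsc1 : Real.sqrt c ≤ 1 := by
    rw [show (1:ℝ) = Real.sqrt 1 by simp]; exact Real.sqrt_le_sqrt hc1
  have hrm : r ≤ m := by nlinarith [sq_nonneg (1 - Real.sqrt c), sq_nonneg σ]
  have hcmeq : cm = m - r := by rw [hcm, hm, hrdef]; nlinarith [hsc]
  have hcpeq : cp = m + r := by rw [hcp, hm, hrdef]; nlinarith [hsc]
  have hsval : Real.sqrt (m ^ 2 - r ^ 2) = σ ^ 2 * (1 - c) := by
    rw [show m ^ 2 - r ^ 2 = (σ ^ 2 * (1 - c)) ^ 2 by rw [hm, hrdef]; nlinarith [hsc]]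
    exact Real.sqrt_sq (by nlinarith)
  have hkey := mp_key m r hr hrm
  have hrw : ∀ lam : ℝ, Real.sqrt ((cp - lam) * (lam - cm)) / (2 * Real.pi * σ ^ 2 * c * lam)
      = (2 * Real.pi * σ ^ 2 * c)⁻¹ * (Real.sqrt ((m + r - lam) * (lam - (m - r))) / lam) := by
    intro lam
    rw [hcmeq, hcpeq]
    rw [div_mul_eq_div_div_swap, div_div]
    ring
  simp_rw [hrw]
  rw [intervalIntegral.integral_const_mul, hcmeq, hcpeq, hkey, hsval]
  have hpi := Real.pi_pos
  field_simp
  ring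
end
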